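/- If T is a tree that is isomorphic to T - x for some single leaf x, and moreover for every leaf y of T there is an isomorphism from T to T - y, then for every finite set W of leaves of T, T is isomorphic to T - W. -/

import Mathlib

open SimpleGraph Set

/-- A leaf of a graph: a vertex with exactly one neighbor (degree 1). -/
def IsLeaf {V : Type*} (G : SimpleGraph V) (x : V) : Prop :=
  (G.neighborSet x).encard = 1

/-- `v` is in the core `c(T)`: deleting `v` leaves at least two infinite components. -/
def InCore {V : Type*} (G : SimpleGraph V) (v : V) : Prop :=
  ∃ C D : (G.induce {u | u ≠ v}).ConnectedComponent,
    C ≠ D ∧ C.supp.Infinite ∧ D.supp.Infinite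

/-- restriction of an iso to corresponding induced subgraphs -/
def isoInduce {V V' : Type*} {G : SimpleGraph V} {H : SimpleGraph V'} (e : G ≃g H)
    (s : Set V) (t : Set V') (hst : ∀ v, v ∈ s ↔ e v ∈ t) :
    G.induce s ≃g H.induce t :=
  ⟨e.toEquiv.subtypeEquiv hst, by
    intro a b
    simp [comap_adj, Equiv.subtypeEquiv, e.map_adj_iff]⟩

lemma isLeaf_map {V V' : Type*} {G : SimpleGraph V} {H : SimpleGraph V'} (e : G ≃g H)
    (v : V) (hv : IsLeaf G v) : IsLeaf H (e v) := by
  unfold IsLeaf at *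
  rw [← Set.encard_congr (e.mapNeighborSet v)]
  exact hv

lemma walk_closed {V : Type*} {G : SimpleGraph V} {S : Set V}
    (hS : ∀ a ∈ S, ∀ b, G.Adj a b → b ∈ S) :
    ∀ {c z : V}, G.Walk c z → c ∈ S → z ∈ S := by
  intro c z p
  induction p with
  | nil => exact id
  | cons h p ih => exact fun hc => ih (hS _ hc _ h)

/-- two leaves of a connected graph on an infinite vertex set are non-adjacent -/
lemma not_adj_of_leaves {V : Type*} {G : SimpleGraph V} (hc : G.Connected) (hV : Infinite V)
    {y w : V} (hy : IsLeaf G y) (hw : IsLeaf G w) : ¬ G.Adj y w := by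
  intro hadj
  obtain ⟨a, ha⟩ := Set.encard_eq_one.mp hy
  obtain ⟨b, hb⟩ := Set.encard_eq_one.mp hw
  have haw : a = w := by
    have : w ∈ G.neighborSet y := hadj
    rw [ha, Set.mem_singleton_iff] at this
    exact this.symm
  have hby : b = y := by
    have : y ∈ G.neighborSet w := hadj.symm
    rw [hb, Set.mem_singleton_iff] at this
    exact this.symm
  rw [haw] at ha
  rw [hby] at hb
  have hS : ∀ c ∈ ({y, w} : Set V), ∀ d, G.Adj c d → d ∈ ({y, w} : Set V) := by
    rintro c (rfl | rfl) d hd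
    · have : d ∈ G.neighborSet c := hd
      rw [ha, Set.mem_singleton_iff] at this
      exact Or.inr this
    · have : d ∈ G.neighborSet c := hd
      rw [hb, Set.mem_singleton_iff] at this
      exact Or.inl this
  have key : ∀ z, z ∈ ({y, w} : Set V) := fun z =>
    walk_closed hS (hc.preconnected y z).some (Or.inl rfl)
  have hfin : (Set.univ : Set V).Finite :=
    Set.Finite.subset ((Set.finite_singleton w).insert y) (fun z _ => key z)
  exact Set.infinite_univ hfin

lemma isLeaf_induce {V : Type*} {G : SimpleGraph V} {w : V}
    (v' : {v : V // v ≠ w}) (hleaf : IsLeaf G v'.1) (hna : ¬ G.Adj v'.1 w) :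
    IsLeaf (G.induce {v | v ≠ w}) v' := by
  unfold IsLeaf at *
  rw [← hleaf]
  apply Set.encard_congr
  exact ⟨fun u => ⟨u.1.1, u.2⟩, fun n => ⟨⟨n.1, fun hnw => hna (by have h2 := n.2; rw [SimpleGraph.mem_neighborSet] at h2; rwa [hnw] at h2)⟩, n.2⟩,
    fun u => Subtype.ext (Subtype.ext rfl), fun n => Subtype.ext rfl⟩

lemma aux_main : ∀ (n : ℕ) {V : Type*} (G : SimpleGraph V), G.Connected → Infinite V →
    (∀ y, IsLeaf G y → Nonempty (G ≃g G.induce {v | v ≠ y})) →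
    ∀ W : Set V, W.Finite → W.ncard = n → (∀ w ∈ W, IsLeaf G w) →
      Nonempty (G ≃g G.induce {v | v ∉ W}) := by
  intro n
  induction n with
  | zero =>
    intro V G hc hV hl W hWf hWn hWl
    have hWe : W = ∅ := (Set.ncard_eq_zero hWf).mp hWn
    subst hWe
    refine ⟨⟨(Equiv.subtypeUnivEquiv (by simp)).symm, ?_⟩⟩
    intro a b
    simp [comap_adj, Equiv.subtypeUnivEquiv]
  | succ n ih =>
    intro V G hc hV hl W hWf hWn hWl
    have hWne : W.Nonempty := Set.nonempty_of_ncard_ne_zero (by omega)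
    obtain ⟨w, hw⟩ := hWne
    obtain ⟨φ⟩ := hl w (hWl w hw)
    set s : Set V := {v | v ≠ w} with hs
    have hVinf' : Infinite ↥s := (Equiv.infinite_iff φ.toEquiv).mp hV
    have hc' : (G.induce s).Connected := φ.connected_iff.mp hc
    have hl' : ∀ y', IsLeaf (G.induce s) y' →
        Nonempty ((G.induce s) ≃g (G.induce s).induce {v | v ≠ y'}) := by
      intro y' hy'
      have hy : IsLeaf G (φ.symm y') := by
        have := isLeaf_map φ.symm y' hy'
        exact this
      obtain ⟨ψ⟩ := hl _ hy
      refine ⟨(φ.symm.trans ψ).trans (isoInduce φ _ _ ?_)⟩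
      intro v
      simp only [Set.mem_setOf_eq]
      constructor
      · intro hne heq
        exact hne (by rw [← heq]; simp)
      · intro hne heq
        apply hne
        rw [heq]; simp
    set W' : Set ↥s := {v' | ↑v' ∈ W} with hW'
    have hW'f : W'.Finite := hWf.preimage (Subtype.val_injective.injOn)
    have himg : Subtype.val '' W' = W \ {w} := by
      ext u
      constructor
      · rintro ⟨⟨u', hu'⟩, hmem, rfl⟩
        exact ⟨hmem, hu'⟩
      · rintro ⟨huW, hune⟩
        exact ⟨⟨u, hune⟩, huW, rfl⟩
    have hW'n : W'.ncard = n := by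
      have h1 : W'.ncard = (Subtype.val '' W').ncard :=
        (Set.ncard_image_of_injective _ Subtype.val_injective).symm
      rw [h1, himg, Set.ncard_diff_singleton_of_mem hw, hWn]
      omega
    have hW'l : ∀ v' ∈ W', IsLeaf (G.induce s) v' := by
      intro v' hv'
      apply isLeaf_induce v' (hWl _ hv')
      exact not_adj_of_leaves hc hV (hWl _ hv') (hWl w hw)
    obtain ⟨ψ⟩ := ih (G.induce s) hc' hVinf' hl' W' hW'f hW'n hW'l
    have hsets : {v : V | ∃ _h : v ≠ w, v ∉ W} = {v | v ∉ W} := by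
      ext v
      simp only [Set.mem_setOf_eq, exists_prop]
      constructor
      · exact fun h => h.2
      · intro hv
        exact ⟨fun heq => hv (heq ▸ hw), hv⟩
    have e3 : (G.induce s).induce {v' | v' ∉ W'} ≃g
        G.induce {v : V | ∃ _h : v ≠ w, v ∉ W} := by
      refine ⟨Equiv.subtypeSubtypeEquivSubtypeExists _ _, ?_⟩
      intro a b
      exact Iff.rfl
    rw [hsets] at e3
    exact ⟨(φ.trans ψ).trans e3⟩

/-- if T ≅ T - x for some leaf x and T ≅ T - y for every leaf y,
then T ≅ T - W for every finite set W of leaves. -/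
theorem stmt_3 {V : Type*} (G : SimpleGraph V) (hT : G.IsTree)
    (h1 : ∃ x, IsLeaf G x ∧ Nonempty (G ≃g G.induce {v | v ≠ x}))
    (h : ∀ y, IsLeaf G y → Nonempty (G ≃g G.induce {v | v ≠ y})) :
    ∀ W : Set V, W.Finite → (∀ w ∈ W, IsLeaf G w) →
      Nonempty (G ≃g G.induce {v | v ∉ W}) := by
  intro W hWf hWl
  have hV : Infinite V := by
    obtain ⟨x, -, ⟨φ⟩⟩ := h1
    by_contra hfin
    rw [not_infinite_iff_finite] at hfin
    have hinj : Function.Injective (fun v => (φ v : V)) :=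
      Subtype.val_injective.comp φ.toEquiv.injective
    obtain ⟨v, hv⟩ := Finite.injective_iff_surjective.mp hinj x
    exact (φ v).2 hv
  exact aux_main W.ncard G hT.isConnected hV h W hWf rfl hWl
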